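/- arXiv:2204.04957 — 2 statements merged into one kernel-verified Lean document; each statement's English description precedes it below -/
import Mathlib

section
/- Let the equation u = Lf + N_k(u,…,u) be quantitatively well-posed with constants C₁ = c₁⟨T⟩^{α₁} for the linear estimate and C₂ = c₂ T^{α₂}⟨T⟩^{α₃} for the multilinear estimate, where ⟨T⟩ = (1+T²)^{1/2}. Then for initial data of size ε, a guaranteed time of existence is T ∼ min(ε^{−β₁}, ε^{−β₂}) where β₁ = (k−1)/((k−1)α₁ + α₂ + α₃) and β₂ = (k−1)/α₂, in the sense that with this choice of T, the smallness condition T^{α₂}⟨T⟩^{α₃+α₁(k−1)} ε^{k−1} ≲ 1 holds. -/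
/-- Guaranteed time of existence: with constants `C₁ = c₁⟨T⟩^{α₁}`,
`C₂ = c₂ T^{α₂}⟨T⟩^{α₃}`, the choice `T = min(ε^{-β₁}, ε^{-β₂})` with
`β₁ = (k-1)/((k-1)α₁+α₂+α₃)`, `β₂ = (k-1)/α₂` makes the smallness condition
`T^{α₂}⟨T⟩^{α₃+α₁(k-1)} ε^{k-1} ≲ 1` hold, where `⟨T⟩ = (1+T²)^{1/2}`. -/
theorem stmt_8 (k : ℕ) (hk : 2 ≤ k) (α₁ α₂ α₃ : ℝ)
    (hα₁ : 0 < α₁) (hα₂ : 0 < α₂) (hα₃ : 0 < α₃) :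
    ∃ C > 0, ∀ ε : ℝ, 0 < ε →
      (min (ε ^ (-((k - 1 : ℝ) / ((k - 1 : ℝ) * α₁ + α₂ + α₃))))
           (ε ^ (-((k - 1 : ℝ) / α₂)))) ^ α₂ *
        (1 + (min (ε ^ (-((k - 1 : ℝ) / ((k - 1 : ℝ) * α₁ + α₂ + α₃))))
                  (ε ^ (-((k - 1 : ℝ) / α₂)))) ^ (2 : ℕ)) ^ ((α₃ + α₁ * (k - 1 : ℝ)) / 2) *
        ε ^ ((k : ℝ) - 1) ≤ C := by
  have hk1 : (1:ℝ) ≤ (k:ℝ) - 1 := by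
    have : (2:ℝ) ≤ (k:ℝ) := by exact_mod_cast hk
    linarith
  have hkk : (0:ℝ) < (k:ℝ) - 1 := by linarith
  set γ : ℝ := α₃ + α₁ * ((k:ℝ) - 1) with hγdef
  have hγ : 0 < γ := by positivity
  refine ⟨(2:ℝ) ^ (γ/2), by positivity, ?_⟩
  intro ε hε
  set β₁ : ℝ := ((k:ℝ) - 1) / (((k:ℝ) - 1) * α₁ + α₂ + α₃) with hβ₁
  set β₂ : ℝ := ((k:ℝ) - 1) / α₂ with hβ₂
  set T : ℝ := min (ε ^ (-β₁)) (ε ^ (-β₂)) with hTdef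
  have hT0 : 0 < T := lt_min (Real.rpow_pos_of_pos hε _) (Real.rpow_pos_of_pos hε _)
  have hεb : (ε ^ (-β₂)) ^ α₂ = ε ^ (-((k:ℝ) - 1)) := by
    rw [← Real.rpow_mul hε.le]
    congr 1
    rw [hβ₂, neg_mul, neg_inj, div_mul_cancel₀ _ hα₂.ne']
  have hεa : (ε ^ (-β₁)) ^ (α₂ + γ) = ε ^ (-((k:ℝ) - 1)) := by
    rw [← Real.rpow_mul hε.le]
    congr 1
    have hden : ((k:ℝ) - 1) * α₁ + α₂ + α₃ ≠ 0 := by positivity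
    rw [hβ₁, hγdef, neg_mul, neg_inj, div_mul_eq_mul_div, div_eq_iff hden]
    ring
  have hcancel : ε ^ (-((k:ℝ) - 1)) * ε ^ ((k:ℝ) - 1) = 1 := by
    rw [← Real.rpow_add hε]; simp
  rcases le_total T 1 with hT1 | hT1
  · -- small T case
    have h1 : (1 + T ^ (2:ℕ) : ℝ) ≤ 2 := by nlinarith
    have h2 : (1 + T ^ (2:ℕ) : ℝ) ^ (γ/2) ≤ (2:ℝ) ^ (γ/2) :=
      Real.rpow_le_rpow (by positivity) h1 (by positivity)
    have h3 : T ^ α₂ ≤ ε ^ (-((k:ℝ) - 1)) := by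
      rw [← hεb]
      exact Real.rpow_le_rpow hT0.le (min_le_right _ _) hα₂.le
    calc T ^ α₂ * (1 + T ^ (2:ℕ)) ^ (γ/2) * ε ^ ((k:ℝ) - 1)
        ≤ ε ^ (-((k:ℝ) - 1)) * (2:ℝ) ^ (γ/2) * ε ^ ((k:ℝ) - 1) := by
          have hp1 : (0:ℝ) ≤ (1 + T ^ (2:ℕ)) ^ (γ/2) := by positivity
          have hp2 : (0:ℝ) ≤ ε ^ ((k:ℝ) - 1) := by positivity
          have hp3 : (0:ℝ) ≤ T ^ α₂ := by positivity
          have hp4 : (0:ℝ) ≤ ε ^ (-((k:ℝ) - 1)) := by positivity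
          nlinarith [mul_le_mul h3 h2 hp1 hp4]
      _ = (2:ℝ) ^ (γ/2) * (ε ^ (-((k:ℝ) - 1)) * ε ^ ((k:ℝ) - 1)) := by ring
      _ = (2:ℝ) ^ (γ/2) := by rw [hcancel, mul_one]
  · -- large T case
    have h1 : (1 + T ^ (2:ℕ) : ℝ) ≤ 2 * T ^ (2:ℕ) := by nlinarith
    have h2 : (1 + T ^ (2:ℕ) : ℝ) ^ (γ/2) ≤ (2:ℝ) ^ (γ/2) * T ^ γ := by
      calc (1 + T ^ (2:ℕ) : ℝ) ^ (γ/2) ≤ (2 * T ^ (2:ℕ)) ^ (γ/2) :=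
            Real.rpow_le_rpow (by positivity) h1 (by positivity)
        _ = (2:ℝ) ^ (γ/2) * T ^ γ := by
            rw [Real.mul_rpow (by norm_num) (by positivity), ← Real.rpow_natCast T 2,
              ← Real.rpow_mul hT0.le]
            rw [show ((2:ℕ):ℝ) * (γ/2) = γ by push_cast; ring]
    have h3 : T ^ α₂ * T ^ γ ≤ ε ^ (-((k:ℝ) - 1)) := by
      rw [← Real.rpow_add hT0, ← hεa]
      exact Real.rpow_le_rpow hT0.le (min_le_left _ _) (by positivity)
    calc T ^ α₂ * (1 + T ^ (2:ℕ)) ^ (γ/2) * ε ^ ((k:ℝ) - 1)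
        ≤ T ^ α₂ * ((2:ℝ) ^ (γ/2) * T ^ γ) * ε ^ ((k:ℝ) - 1) := by
          have hp2 : (0:ℝ) ≤ ε ^ ((k:ℝ) - 1) := by positivity
          have hp3 : (0:ℝ) ≤ T ^ α₂ := by positivity
          exact mul_le_mul_of_nonneg_right (mul_le_mul_of_nonneg_left h2 hp3) hp2
      _ = (2:ℝ) ^ (γ/2) * ((T ^ α₂ * T ^ γ) * ε ^ ((k:ℝ) - 1)) := by ring
      _ ≤ (2:ℝ) ^ (γ/2) * (ε ^ (-((k:ℝ) - 1)) * ε ^ ((k:ℝ) - 1)) := by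
          have hp2 : (0:ℝ) ≤ ε ^ ((k:ℝ) - 1) := by positivity
          exact mul_le_mul_of_nonneg_left (mul_le_mul_of_nonneg_right h3 hp2) (by positivity)
      _ = (2:ℝ) ^ (γ/2) := by rw [hcancel, mul_one]
end

section
/- Let f₁, f₂, f₃ ∈ L²(ℝ) with f̂_i = χ_{[N, N+α]} for i = 1,2,3, where N ≥ 1 and 0 < α ≤ 1. Then the function g with ĝ(ξ) = ∫_{ξ₁−ξ₂+ξ₃=ξ} f̂₁(ξ₁)f̂₂(ξ₂)f̂₃(ξ₃) dξ₁dξ₃ is supported in [N−α, N+2α], and ĝ(N) ≥ c α² for an absolute constant c > 0. -/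
open MeasureTheory

/-- Lower bound on the trilinear resonant interaction of a frequency-localized bump:
with `f̂ᵢ = χ_{[N,N+α]}`, the convolution-type integral
`ĝ(ξ) = ∫∫ χ(ξ₁)χ(ξ₁+ξ₃-ξ)χ(ξ₃) dξ₁dξ₃` is supported in `[N-α, N+2α]`
and satisfies `ĝ(N) ≥ cα²` for an absolute constant `c > 0`. -/
theorem stmt_19 :
    ∃ c > (0 : ℝ), ∀ N α : ℝ, 1 ≤ N → 0 < α → α ≤ 1 →
      (∀ ξ : ℝ, ξ ∉ Set.Icc (N - α) (N + 2 * α) →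
        (∫ p : ℝ × ℝ, Set.indicator (Set.Icc N (N + α)) (fun _ => (1 : ℝ)) p.1 *
            Set.indicator (Set.Icc N (N + α)) (fun _ => (1 : ℝ)) (p.1 + p.2 - ξ) *
            Set.indicator (Set.Icc N (N + α)) (fun _ => (1 : ℝ)) p.2) = 0) ∧
      (∫ p : ℝ × ℝ, Set.indicator (Set.Icc N (N + α)) (fun _ => (1 : ℝ)) p.1 *
          Set.indicator (Set.Icc N (N + α)) (fun _ => (1 : ℝ)) (p.1 + p.2 - N) *
          Set.indicator (Set.Icc N (N + α)) (fun _ => (1 : ℝ)) p.2) ≥ c * α ^ 2 := by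
  refine ⟨1/4, by norm_num, fun N α hN hα hα1 => ?_⟩
  constructor
  · -- support statement
    intro ξ hξ
    have hzero : ∀ p : ℝ × ℝ,
        Set.indicator (Set.Icc N (N + α)) (fun _ => (1 : ℝ)) p.1 *
          Set.indicator (Set.Icc N (N + α)) (fun _ => (1 : ℝ)) (p.1 + p.2 - ξ) *
          Set.indicator (Set.Icc N (N + α)) (fun _ => (1 : ℝ)) p.2 = 0 := by
      intro p
      by_cases h1 : p.1 ∈ Set.Icc N (N + α)
      · by_cases h2 : p.1 + p.2 - ξ ∈ Set.Icc N (N + α)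
        · by_cases h3 : p.2 ∈ Set.Icc N (N + α)
          · exfalso
            obtain ⟨a1, b1⟩ := h1
            obtain ⟨a2, b2⟩ := h2
            obtain ⟨a3, b3⟩ := h3
            exact hξ ⟨by linarith, by linarith⟩
          · simp [Set.indicator_of_notMem h3]
        · simp [Set.indicator_of_notMem h2]
      · simp [Set.indicator_of_notMem h1]
    simp only [hzero]
    exact integral_zero _ _
  · -- lower bound at ξ = N
    set S : Set (ℝ × ℝ) := {p : ℝ × ℝ | p.1 ∈ Set.Icc N (N + α) ∧
        p.1 + p.2 - N ∈ Set.Icc N (N + α) ∧ p.2 ∈ Set.Icc N (N + α)} with hS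
    have hSeq : S = ((fun p : ℝ × ℝ => p.1) ⁻¹' Set.Icc N (N + α)) ∩
        (((fun p : ℝ × ℝ => p.1 + p.2 - N) ⁻¹' Set.Icc N (N + α)) ∩
          ((fun p : ℝ × ℝ => p.2) ⁻¹' Set.Icc N (N + α))) := by
      ext p; simp [hS]
    have hmeas : MeasurableSet S := by
      rw [hSeq]
      exact (measurableSet_Icc.preimage measurable_fst).inter
        ((measurableSet_Icc.preimage ((measurable_fst.add measurable_snd).sub measurable_const)).inter
          (measurableSet_Icc.preimage measurable_snd))
    have hind : ∀ p : ℝ × ℝ,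
        Set.indicator (Set.Icc N (N + α)) (fun _ => (1 : ℝ)) p.1 *
          Set.indicator (Set.Icc N (N + α)) (fun _ => (1 : ℝ)) (p.1 + p.2 - N) *
          Set.indicator (Set.Icc N (N + α)) (fun _ => (1 : ℝ)) p.2 =
        S.indicator (fun _ => (1 : ℝ)) p := by
      intro p
      by_cases h1 : p.1 ∈ Set.Icc N (N + α)
      · by_cases h2 : p.1 + p.2 - N ∈ Set.Icc N (N + α)
        · by_cases h3 : p.2 ∈ Set.Icc N (N + α)
          · have hp : p ∈ S := ⟨h1, h2, h3⟩
            rw [Set.indicator_of_mem h1, Set.indicator_of_mem h2,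
              Set.indicator_of_mem h3, Set.indicator_of_mem hp]
            norm_num
          · have hp : p ∉ S := fun hp => h3 hp.2.2
            rw [Set.indicator_of_notMem h3, Set.indicator_of_notMem hp, mul_zero]
        · have hp : p ∉ S := fun hp => h2 hp.2.1
          rw [Set.indicator_of_notMem h2, Set.indicator_of_notMem hp, mul_zero, zero_mul]
      · have hp : p ∉ S := fun hp => h1 hp.1
        rw [Set.indicator_of_notMem h1, Set.indicator_of_notMem hp, zero_mul, zero_mul]
    simp only [hind]
    rw [integral_indicator_const (1 : ℝ) hmeas, smul_eq_mul, mul_one]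
    -- now show (volume S).toReal ≥ (1/4) * α ^ 2
    have hT : Set.Icc N (N + α/2) ×ˢ Set.Icc N (N + α/2) ⊆ S := by
      rintro ⟨x, y⟩ ⟨hx, hy⟩
      simp only [Set.mem_Icc] at hx hy
      refine ⟨⟨by linarith [hx.1], by linarith [hx.2]⟩,
        ⟨by linarith [hx.1, hy.1], by linarith [hx.2, hy.2]⟩,
        ⟨by linarith [hy.1], by linarith [hy.2]⟩⟩
    have hR : S ⊆ Set.Icc N (N + α) ×ˢ Set.Icc N (N + α) := by
      rintro ⟨x, y⟩ ⟨h1, _, h3⟩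
      exact ⟨h1, h3⟩
    have hvolR : volume (Set.Icc N (N + α) ×ˢ Set.Icc N (N + α)) < ⊤ := by
      rw [Measure.volume_eq_prod ℝ ℝ, Measure.prod_prod, Real.volume_Icc]
      exact ENNReal.mul_lt_top ENNReal.ofReal_lt_top ENNReal.ofReal_lt_top
    have hSfin : volume S ≠ ⊤ :=
      ((lt_of_le_of_lt (measure_mono hR) hvolR)).ne
    have hvolT : volume (Set.Icc N (N + α/2) ×ˢ Set.Icc N (N + α/2)) =
        ENNReal.ofReal (α/2) * ENNReal.ofReal (α/2) := by
      rw [Measure.volume_eq_prod ℝ ℝ, Measure.prod_prod, Real.volume_Icc]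
      ring_nf
    have hle : (volume (Set.Icc N (N + α/2) ×ˢ Set.Icc N (N + α/2))).toReal ≤
        (volume S).toReal :=
      ENNReal.toReal_mono hSfin (measure_mono hT)
    have hTval : (volume (Set.Icc N (N + α/2) ×ˢ Set.Icc N (N + α/2))).toReal =
        (α/2) * (α/2) := by
      rw [hvolT, ← ENNReal.ofReal_mul (by linarith), ENNReal.toReal_ofReal
        (by nlinarith)]
    have hreal : volume.real S = (volume S).toReal := rfl
    nlinarith [hle, hTval, hreal]
end
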